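/- arXiv:1309.5508 — 2 statements merged into one kernel-verified Lean document; each statement's English description precedes it below -/
import Mathlib

section
/- Under the KKT-type conditions at a feasible x* with convex constraints, if for all feasible x and all i ∈ {1,…,m}, k ∈ {1,…,n} one has μ_k^{A_i}·(τ_i/g_i(x*))⟨x-x*, p_i^k⟩² ≥ μ_k^{B_i}·(τ_i f_i(x*)/g_i(x*)²)⟨x-x*, q_i^k⟩², where (μ_k^{A_i}, p_i^k) and (μ_k^{B_i}, q_i^k) are orthonormal eigenpairs of A_i and B_i respectively, then x* is a Pareto optimal solution of the vector quadratic fractional problem. -/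
open Matrix

private lemma dot_sum' {N K : ℕ} (d : Fin N → ℝ) (v : Fin K → Fin N → ℝ) :
    d ⬝ᵥ (∑ j, v j) = ∑ j, d ⬝ᵥ v j := by
  simp only [dotProduct, Finset.sum_apply, Finset.mul_sum]
  exact Finset.sum_comm

private lemma sum_dot' {N K : ℕ} (d : Fin N → ℝ) (v : Fin K → Fin N → ℝ) :
    (∑ j, v j) ⬝ᵥ d = ∑ j, v j ⬝ᵥ d := by
  simp only [dotProduct, Finset.sum_apply, Finset.sum_mul]
  exact Finset.sum_comm

private lemma sum_mulVec' {N K : ℕ} (M : Fin K → Matrix (Fin N) (Fin N) ℝ) (d : Fin N → ℝ) :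
    (∑ j, M j) *ᵥ d = ∑ j, M j *ᵥ d := by
  funext i
  simp only [mulVec, dotProduct, Matrix.sum_apply, Finset.sum_apply, Finset.sum_mul]
  exact Finset.sum_comm

private lemma vecMulVec_mulVec' {N : ℕ} (w v d : Fin N → ℝ) :
    vecMulVec w v *ᵥ d = (v ⬝ᵥ d) • w := by
  funext i
  simp only [mulVec, dotProduct, vecMulVec_apply, Pi.smul_apply, smul_eq_mul]
  rw [Finset.sum_mul]
  exact Finset.sum_congr rfl fun j _ => by ring

private lemma quadform_decomp' {N K : ℕ} (μ : Fin K → ℝ) (p : Fin K → Fin N → ℝ) (d : Fin N → ℝ) :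
    d ⬝ᵥ ((∑ j, μ j • vecMulVec (p j) (p j)) *ᵥ d) = ∑ j, μ j * (d ⬝ᵥ p j)^2 := by
  rw [sum_mulVec']
  rw [show (fun j => (μ j • vecMulVec (p j) (p j)) *ᵥ d) = fun j => (μ j * (p j ⬝ᵥ d)) • p j from
    funext fun j => by rw [smul_mulVec, vecMulVec_mulVec', smul_smul]]
  rw [dot_sum']
  refine Finset.sum_congr rfl fun j _ => ?_
  rw [dotProduct_smul, dotProduct_comm]
  simp only [smul_eq_mul, pow_two]; ring

private lemma quad_expand' {N : ℕ} (M : Matrix (Fin N) (Fin N) ℝ) (hM : M.IsSymm)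
    (xs d : Fin N → ℝ) :
    (xs + d) ⬝ᵥ (M *ᵥ (xs + d)) = xs ⬝ᵥ (M *ᵥ xs) + ((2:ℝ) • (M *ᵥ xs)) ⬝ᵥ d + d ⬝ᵥ (M *ᵥ d) := by
  have h1 : xs ⬝ᵥ (M *ᵥ d) = (M *ᵥ xs) ⬝ᵥ d := by
    rw [Matrix.dotProduct_mulVec, ← Matrix.mulVec_transpose, hM.eq]
  simp only [Matrix.mulVec_add, dotProduct_add, add_dotProduct, smul_dotProduct, h1,
    dotProduct_comm d (M *ᵥ xs), smul_eq_mul]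
  ring

theorem stmt_8 {n m ℓ : ℕ}
    (A B : Fin m → Matrix (Fin n) (Fin n) ℝ)
    (a b : Fin m → Fin n → ℝ) (abar bbar : Fin m → ℝ)
    (hA : ∀ i, (A i).IsSymm) (hB : ∀ i, (B i).PosSemidef)
    (f g : Fin m → (Fin n → ℝ) → ℝ)
    (hf : ∀ i x, f i x = x ⬝ᵥ (A i *ᵥ x) + a i ⬝ᵥ x + abar i)
    (hg : ∀ i x, g i x = x ⬝ᵥ (B i *ᵥ x) + b i ⬝ᵥ x + bbar i)
    (hgpos : ∀ i x, 0 < g i x)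
    (h : Fin ℓ → (Fin n → ℝ) → ℝ) (hgrad : Fin ℓ → (Fin n → ℝ) → (Fin n → ℝ))
    (hconv : ∀ j x y, h j x - h j y ≥ (hgrad j y) ⬝ᵥ (x - y))
    (S : Set (Fin n → ℝ)) (hS : S = {x | ∀ j, h j x ≤ 0})
    (xs : Fin n → ℝ) (hxs : xs ∈ S)
    (τ : Fin m → ℝ) (lam : Fin ℓ → ℝ)
    (hτ : ∀ i, 0 < τ i) (hlam : ∀ j, 0 ≤ lam j)
    (hstat : ∑ i, τ i •
        (((g i xs) ^ 2)⁻¹ •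
          ((g i xs) • ((2 : ℝ) • (A i *ᵥ xs) + a i) - (f i xs) • ((2 : ℝ) • (B i *ᵥ xs) + b i)))
        + ∑ j, lam j • hgrad j xs = 0)
    (hcomp : ∑ j, lam j * h j xs = 0)
    (p q : Fin m → Fin n → (Fin n → ℝ)) (μA μB : Fin m → Fin n → ℝ)
    (horthp : ∀ i k l, p i k ⬝ᵥ p i l = if k = l then 1 else 0)
    (horthq : ∀ i k l, q i k ⬝ᵥ q i l = if k = l then 1 else 0)
    (hdecA : ∀ i, A i = ∑ k, μA i k • Matrix.vecMulVec (p i k) (p i k))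
    (hdecB : ∀ i, B i = ∑ k, μB i k • Matrix.vecMulVec (q i k) (q i k))
    (hkey : ∀ x ∈ S, ∀ i k,
        μA i k * ((τ i / g i xs) * ((x - xs) ⬝ᵥ p i k) ^ 2)
          ≥ μB i k * ((τ i * f i xs / (g i xs) ^ 2) * ((x - xs) ⬝ᵥ q i k) ^ 2)) :
    ¬ ∃ x ∈ S, (∀ i, f i x / g i x ≤ f i xs / g i xs) ∧
        (∃ i, f i x / g i x < f i xs / g i xs) := by
  rintro ⟨x, hxS, hle, i0, hlt⟩
  set d : Fin n → ℝ := x - xs with hd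
  have hxd : x = xs + d := by simp [hd]
  -- expansions of f and g at x
  have hfexp : ∀ i, f i x = f i xs + ((2:ℝ) • (A i *ᵥ xs) + a i) ⬝ᵥ d + d ⬝ᵥ (A i *ᵥ d) := by
    intro i
    rw [hf i x, hf i xs, hxd, quad_expand' (A i) (hA i) xs d]
    simp only [dotProduct_add, add_dotProduct]
    ring
  have hBsymm : ∀ i, (B i).IsSymm := by
    intro i
    have := (hB i).1
    rwa [Matrix.IsHermitian, conjTranspose_eq_transpose_of_trivial] at this
  have hgexp : ∀ i, g i x = g i xs + ((2:ℝ) • (B i *ᵥ xs) + b i) ⬝ᵥ d + d ⬝ᵥ (B i *ᵥ d) := by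
    intro i
    rw [hg i x, hg i xs, hxd, quad_expand' (B i) (hBsymm i) xs d]
    simp only [dotProduct_add, add_dotProduct]
    ring
  -- quadratic term nonnegativity from hkey
  have hQ : ∀ i, 0 ≤ τ i / g i xs * (d ⬝ᵥ (A i *ᵥ d))
      - τ i * f i xs / (g i xs)^2 * (d ⬝ᵥ (B i *ᵥ d)) := by
    intro i
    have hqa : d ⬝ᵥ (A i *ᵥ d) = ∑ k, μA i k * (d ⬝ᵥ p i k)^2 := by
      rw [hdecA i, quadform_decomp']
    have hqb : d ⬝ᵥ (B i *ᵥ d) = ∑ k, μB i k * (d ⬝ᵥ q i k)^2 := by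
      rw [hdecB i, quadform_decomp']
    rw [hqa, hqb, Finset.mul_sum, Finset.mul_sum, ← Finset.sum_sub_distrib]
    refine Finset.sum_nonneg fun k _ => ?_
    have := hkey x hxS i k
    rw [← hd] at this
    nlinarith [this]
  -- gradient term nonnegativity from stationarity, convexity, complementarity
  set v : Fin m → Fin n → ℝ := fun i => τ i •
        (((g i xs) ^ 2)⁻¹ •
          ((g i xs) • ((2 : ℝ) • (A i *ᵥ xs) + a i) - (f i xs) • ((2 : ℝ) • (B i *ᵥ xs) + b i)))
    with hv
  have hgradterm : 0 ≤ (∑ i, v i) ⬝ᵥ d := by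
    have hsum : (∑ i, v i) = - ∑ j, lam j • hgrad j xs := by
      rw [eq_neg_iff_add_eq_zero]; exact hstat
    rw [hsum, neg_dotProduct, sum_dot']
    have hbound : ∀ j, (lam j • hgrad j xs) ⬝ᵥ d ≤ lam j * (h j x - h j xs) := by
      intro j
      rw [smul_dotProduct, smul_eq_mul]
      have h1 := hconv j x xs
      rw [← hd] at h1
      exact mul_le_mul_of_nonneg_left h1 (hlam j)
    have h2 : ∑ j, (lam j • hgrad j xs) ⬝ᵥ d ≤ ∑ j, lam j * (h j x - h j xs) :=
      Finset.sum_le_sum fun j _ => hbound j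
    have h3 : ∑ j, lam j * (h j x - h j xs) = ∑ j, lam j * h j x - ∑ j, lam j * h j xs := by
      rw [← Finset.sum_sub_distrib]; exact Finset.sum_congr rfl fun j _ => by ring
    have h4 : ∑ j, lam j * h j x ≤ 0 := by
      refine Finset.sum_nonpos fun j _ => ?_
      have hxj : h j x ≤ 0 := by rw [hS] at hxS; exact hxS j
      exact mul_nonpos_of_nonneg_of_nonpos (hlam j) hxj
    linarith
  -- each v i ⬝ᵥ d as a scalar
  have hvdot : ∀ i, v i ⬝ᵥ d = τ i * ((g i xs)^2)⁻¹ *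
      (g i xs * (((2:ℝ) • (A i *ᵥ xs) + a i) ⬝ᵥ d)
        - f i xs * (((2:ℝ) • (B i *ᵥ xs) + b i) ⬝ᵥ d)) := by
    intro i
    rw [hv]
    simp only [smul_dotProduct, sub_dotProduct, smul_eq_mul]
    ring
  -- key identity: τ i * ψ i = v i ⬝ᵥ d + quadratic term
  have hpsi : ∀ i, τ i * (f i x / g i xs - f i xs * g i x / (g i xs)^2)
      = v i ⬝ᵥ d + (τ i / g i xs * (d ⬝ᵥ (A i *ᵥ d))
        - τ i * f i xs / (g i xs)^2 * (d ⬝ᵥ (B i *ᵥ d))) := by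
    intro i
    rw [hvdot i, hfexp i, hgexp i]
    have hG : g i xs ≠ 0 := ne_of_gt (hgpos i xs)
    field_simp
    ring
  -- lower bound for the sum
  have hlow : 0 ≤ ∑ i, τ i * (f i x / g i xs - f i xs * g i x / (g i xs)^2) := by
    have : ∑ i, τ i * (f i x / g i xs - f i xs * g i x / (g i xs)^2)
        = (∑ i, v i) ⬝ᵥ d + ∑ i, (τ i / g i xs * (d ⬝ᵥ (A i *ᵥ d))
          - τ i * f i xs / (g i xs)^2 * (d ⬝ᵥ (B i *ᵥ d))) := by
      rw [sum_dot', ← Finset.sum_add_distrib]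
      exact Finset.sum_congr rfl fun i _ => hpsi i
    rw [this]
    have := Finset.sum_nonneg (fun i (_ : i ∈ Finset.univ) => hQ i)
    linarith
  -- upper bound (strict) from Pareto domination
  have hup : ∑ i, τ i * (f i x / g i xs - f i xs * g i x / (g i xs)^2) < 0 := by
    have hterm : ∀ i, τ i * (f i x / g i xs - f i xs * g i x / (g i xs)^2) ≤ 0 := by
      intro i
      have hgx := hgpos i x
      have hgxs := hgpos i xs
      have hcross : f i x * g i xs ≤ f i xs * g i x :=
        (div_le_div_iff₀ hgx hgxs).mp (hle i)
      have hψ : f i x / g i xs - f i xs * g i x / (g i xs)^2 ≤ 0 := by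
        rw [sub_nonpos, div_le_div_iff₀ hgxs (pow_pos hgxs 2)]
        nlinarith
      exact mul_nonpos_of_nonneg_of_nonpos (le_of_lt (hτ i)) hψ
    have hterm0 : τ i0 * (f i0 x / g i0 xs - f i0 xs * g i0 x / (g i0 xs)^2) < 0 := by
      have hgx := hgpos i0 x
      have hgxs := hgpos i0 xs
      have hcross : f i0 x * g i0 xs < f i0 xs * g i0 x :=
        (div_lt_div_iff₀ hgx hgxs).mp hlt
      have hψ : f i0 x / g i0 xs - f i0 xs * g i0 x / (g i0 xs)^2 < 0 := by
        rw [sub_neg, div_lt_div_iff₀ hgxs (pow_pos hgxs 2)]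
        nlinarith
      exact mul_neg_of_pos_of_neg (hτ i0) hψ
    calc ∑ i, τ i * (f i x / g i xs - f i xs * g i x / (g i xs)^2)
        < ∑ _i : Fin m, (0:ℝ) := by
          refine Finset.sum_lt_sum (fun i _ => hterm i) ⟨i0, Finset.mem_univ i0, hterm0⟩
      _ = 0 := by simp
  linarith
end

section
/- (Converse duality) Let (u*, τ*, λ*) be dual-feasible: Σᵢ τ*_i (∇f_i(u*) - (f_i(u*)/g_i(u*))∇g_i(u*)) + Σⱼ λ*_j ∇h_j(u*) = 0, Σⱼ λ*_j h_j(u*) ≥ 0, τ* > 0, λ* ≥ 0; and suppose u* is also primal-feasible: h_j(u*) ≤ 0 for all j. If Σᵢ τ*_i [A_i - (f_i(u*)/g_i(u*))B_i] is positive semidefinite and each h_j is convex, then u* is Pareto optimal for the vector quadratic fractional problem. -/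
open Matrix

lemma symm_dot {n : ℕ} {A : Matrix (Fin n) (Fin n) ℝ} (hA : A.IsSymm)
    (x u : Fin n → ℝ) : x ⬝ᵥ (A *ᵥ u) = u ⬝ᵥ (A *ᵥ x) := by
  simp only [dotProduct, mulVec, Finset.mul_sum]
  rw [Finset.sum_comm]
  refine Finset.sum_congr rfl fun k _ => Finset.sum_congr rfl fun j _ => ?_
  rw [hA.apply]; ring

lemma quad_expand {n : ℕ} {A : Matrix (Fin n) (Fin n) ℝ} (hA : A.IsSymm)
    (x u : Fin n → ℝ) :
    x ⬝ᵥ (A *ᵥ x) = u ⬝ᵥ (A *ᵥ u) + ((2 : ℝ) • (A *ᵥ u)) ⬝ᵥ (x - u)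
      + (x - u) ⬝ᵥ (A *ᵥ (x - u)) := by
  have h1 := symm_dot hA x u
  have h2 : (A *ᵥ u) ⬝ᵥ x = x ⬝ᵥ (A *ᵥ u) := dotProduct_comm _ _
  have h3 : (A *ᵥ u) ⬝ᵥ u = u ⬝ᵥ (A *ᵥ u) := dotProduct_comm _ _
  simp only [Matrix.mulVec_sub, dotProduct_sub, sub_dotProduct, smul_dotProduct,
    smul_eq_mul]
  linarith

lemma sum_mulVec'_s16 {n : ℕ} {ι : Type*} (s : Finset ι)
    (M : ι → Matrix (Fin n) (Fin n) ℝ) (v : Fin n → ℝ) :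
    (∑ i ∈ s, M i) *ᵥ v = ∑ i ∈ s, M i *ᵥ v := by
  ext k
  simp [Matrix.mulVec, dotProduct, Finset.sum_apply, Matrix.sum_apply,
    Finset.sum_mul]
  rw [Finset.sum_comm]

lemma sum_dot'_s16 {n : ℕ} {ι : Type*} (s : Finset ι)
    (w : ι → Fin n → ℝ) (v : Fin n → ℝ) :
    (∑ i ∈ s, w i) ⬝ᵥ v = ∑ i ∈ s, w i ⬝ᵥ v := by
  simp only [dotProduct, Finset.sum_apply, Finset.sum_mul]
  rw [Finset.sum_comm]

lemma dot_sum'_s16 {n : ℕ} {ι : Type*} (s : Finset ι)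
    (v : Fin n → ℝ) (w : ι → Fin n → ℝ) :
    v ⬝ᵥ (∑ i ∈ s, w i) = ∑ i ∈ s, v ⬝ᵥ w i := by
  rw [dotProduct_comm, sum_dot'_s16]
  simp_rw [dotProduct_comm]

lemma psd_symm {n : ℕ} (B : Matrix (Fin n) (Fin n) ℝ) (h : B.PosSemidef) :
    B.IsSymm := by
  have h1 : Bᴴ = B := h.1
  rwa [Matrix.conjTranspose_eq_transpose_of_trivial] at h1

theorem stmt_16 {n m ℓ : ℕ}
    (A B : Fin m → Matrix (Fin n) (Fin n) ℝ)
    (a b : Fin m → Fin n → ℝ) (abar bbar : Fin m → ℝ)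
    (hA : ∀ i, (A i).IsSymm) (hB : ∀ i, (B i).PosSemidef)
    (f g : Fin m → (Fin n → ℝ) → ℝ)
    (hf : ∀ i x, f i x = x ⬝ᵥ (A i *ᵥ x) + a i ⬝ᵥ x + abar i)
    (hg : ∀ i x, g i x = x ⬝ᵥ (B i *ᵥ x) + b i ⬝ᵥ x + bbar i)
    (hgpos : ∀ i x, 0 < g i x)
    (h : Fin ℓ → (Fin n → ℝ) → ℝ) (hgrad : Fin ℓ → (Fin n → ℝ) → (Fin n → ℝ))
    (hconv : ∀ j x y, h j x - h j y ≥ (hgrad j y) ⬝ᵥ (x - y))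
    (u : Fin n → ℝ) (hu : ∀ j, h j u ≤ 0)
    (τ : Fin m → ℝ) (lam : Fin ℓ → ℝ)
    (hτ : ∀ i, 0 < τ i) (hlam : ∀ j, 0 ≤ lam j)
    (hstat : ∑ i, τ i •
        (((2 : ℝ) • (A i *ᵥ u) + a i) - (f i u / g i u) • ((2 : ℝ) • (B i *ᵥ u) + b i))
        + ∑ j, lam j • hgrad j u = 0)
    (hcomp : 0 ≤ ∑ j, lam j * h j u)
    (hpsd : ∀ v : Fin n → ℝ,
      0 ≤ v ⬝ᵥ ((∑ i, τ i • (A i - (f i u / g i u) • B i)) *ᵥ v)) :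
    ¬ ∃ x, (∀ j, h j x ≤ 0) ∧ (∀ i, f i x / g i x ≤ f i u / g i u) ∧
        (fun i => f i x / g i x) ≠ (fun i => f i u / g i u) := by
  rintro ⟨x, hxfeas, hxle, hxne⟩
  -- strict index
  obtain ⟨i0, hi0⟩ : ∃ i, f i x / g i x < f i u / g i u := by
    by_contra hc
    push_neg at hc
    exact hxne (funext fun i => le_antisymm (hxle i) (hc i))
  -- φ values at x
  have hφle : ∀ i, f i x - (f i u / g i u) * g i x ≤ 0 := fun i =>
    sub_nonpos.mpr ((div_le_iff₀ (hgpos i x)).mp (hxle i))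
  have hφlt : f i0 x - (f i0 u / g i0 u) * g i0 x < 0 :=
    sub_neg.mpr ((div_lt_iff₀ (hgpos i0 x)).mp hi0)
  -- the weighted sum is negative
  have hS : ∑ i, τ i * (f i x - (f i u / g i u) * g i x) < 0 := by
    have := Finset.sum_lt_sum
      (f := fun i => τ i * (f i x - (f i u / g i u) * g i x))
      (g := fun _ : Fin m => (0 : ℝ))
      (fun i _ => mul_nonpos_of_nonneg_of_nonpos (hτ i).le (hφle i))
      ⟨i0, Finset.mem_univ i0, mul_neg_of_pos_of_neg (hτ i0) hφlt⟩
    simpa using this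
  -- per-index decomposition
  have key : ∀ i, f i x - (f i u / g i u) * g i x =
      ((((2 : ℝ) • (A i *ᵥ u) + a i)
          - (f i u / g i u) • ((2 : ℝ) • (B i *ᵥ u) + b i)) ⬝ᵥ (x - u))
      + ((x - u) ⬝ᵥ ((A i - (f i u / g i u) • B i) *ᵥ (x - u))) := by
    intro i
    have eA := quad_expand (hA i) x u
    have eB := quad_expand (psd_symm _ (hB i)) x u
    have eF : f i x - f i u = ((2 : ℝ) • (A i *ᵥ u)) ⬝ᵥ (x - u)
        + a i ⬝ᵥ (x - u) + (x - u) ⬝ᵥ (A i *ᵥ (x - u)) := by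
      rw [hf, hf]
      simp only [dotProduct_sub, sub_dotProduct] at eA ⊢
      linarith
    have eG : g i x - g i u = ((2 : ℝ) • (B i *ᵥ u)) ⬝ᵥ (x - u)
        + b i ⬝ᵥ (x - u) + (x - u) ⬝ᵥ (B i *ᵥ (x - u)) := by
      rw [hg, hg]
      simp only [dotProduct_sub, sub_dotProduct] at eB ⊢
      linarith
    have hgu : g i u ≠ 0 := (hgpos i u).ne'
    have hc : f i u - (f i u / g i u) * g i u = 0 := by
      rw [div_mul_cancel₀ _ hgu, sub_self]
    simp only [Matrix.sub_mulVec, Matrix.smul_mulVec, Matrix.mulVec_sub,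
      sub_dotProduct, add_dotProduct, smul_dotProduct, dotProduct_sub,
      dotProduct_smul, smul_eq_mul] at eF eG ⊢
    linear_combination eF - (f i u / g i u) * eG + hc
  -- total decomposition
  have hsum : ∑ i, τ i * (f i x - (f i u / g i u) * g i x) =
      ((∑ i, τ i • (((2 : ℝ) • (A i *ᵥ u) + a i)
          - (f i u / g i u) • ((2 : ℝ) • (B i *ᵥ u) + b i))) ⬝ᵥ (x - u))
      + ((x - u) ⬝ᵥ ((∑ i, τ i • (A i - (f i u / g i u) • B i)) *ᵥ (x - u))) := by
    rw [sum_dot'_s16, sum_mulVec'_s16, dot_sum'_s16, ← Finset.sum_add_distrib]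
    refine Finset.sum_congr rfl fun i _ => ?_
    rw [key i]
    simp only [smul_dotProduct, Matrix.smul_mulVec, dotProduct_smul, smul_eq_mul]
    ring
  -- gradient part is nonnegative
  have hgradeq : ∑ i, τ i • (((2 : ℝ) • (A i *ᵥ u) + a i)
      - (f i u / g i u) • ((2 : ℝ) • (B i *ᵥ u) + b i)) = -∑ j, lam j • hgrad j u :=
    eq_neg_of_add_eq_zero_left hstat
  have hgradpart : 0 ≤ (∑ i, τ i • (((2 : ℝ) • (A i *ᵥ u) + a i)
      - (f i u / g i u) • ((2 : ℝ) • (B i *ᵥ u) + b i))) ⬝ᵥ (x - u) := by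
    rw [hgradeq, neg_dotProduct, sum_dot'_s16]
    simp only [smul_dotProduct, smul_eq_mul]
    have h1 : ∀ j, lam j * (hgrad j u ⬝ᵥ (x - u)) ≤ lam j * (h j x - h j u) :=
      fun j => mul_le_mul_of_nonneg_left (hconv j x u) (hlam j)
    have h2 : ∑ j, lam j * (hgrad j u ⬝ᵥ (x - u)) ≤ ∑ j, lam j * (h j x - h j u) :=
      Finset.sum_le_sum fun j _ => h1 j
    have h3 : ∑ j, lam j * (h j x - h j u) = ∑ j, lam j * h j x - ∑ j, lam j * h j u := by
      rw [← Finset.sum_sub_distrib]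
      exact Finset.sum_congr rfl fun j _ => by ring
    have h4 : ∑ j, lam j * h j x ≤ 0 :=
      Finset.sum_nonpos fun j _ => mul_nonpos_of_nonneg_of_nonpos (hlam j) (hxfeas j)
    linarith
  have hquad := hpsd (x - u)
  linarith [hsum ▸ hS]
end
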